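/- arXiv:0708.2383 — 3 statements merged into one kernel-verified Lean document; each statement's English description precedes it below -/
import Mathlib

section
/- For every 0 < a < 1 and z > 0, the integral ∫₀^∞ e^{-(a+1)θ} (1 - e^{-θ})^{-a} (e^z - e^{-θ})^{-1} dθ equals ((1 - e^{-z})^{-a} - 1) · π / sin(πa). -/
open Real MeasureTheory Set


private lemma exp_neg_image : (fun θ : ℝ => Real.exp (-θ)) '' Set.Ioi 0 = Set.Ioo 0 1 := by
  ext t
  constructor
  · rintro ⟨θ, hθ, rfl⟩
    exact ⟨Real.exp_pos _, by rw [Real.exp_lt_one_iff]; simpa using hθ⟩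
  · rintro ⟨h0, h1⟩
    exact ⟨-Real.log t, by simpa using Real.log_neg h0 h1, by simp [Real.exp_log h0]⟩

private lemma exp_neg_injOn : Set.InjOn (fun θ : ℝ => Real.exp (-θ)) (Set.Ioi 0) :=
  fun x _ y _ h => by simpa using Real.exp_injective h

private lemma exp_neg_deriv : ∀ θ ∈ Set.Ioi (0:ℝ),
    HasDerivWithinAt (fun θ : ℝ => Real.exp (-θ)) (-Real.exp (-θ)) (Set.Ioi 0) θ := by
  intro θ _
  simpa [Function.comp_def] using ((Real.hasDerivAt_exp (-θ)).comp θ (hasDerivAt_neg θ)).hasDerivWithinAt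

/-- Substitution t = e^{-θ}. -/
private lemma subst_exp_neg (g : ℝ → ℝ) :
    ∫ t in Set.Ioo (0:ℝ) 1, g t = ∫ θ in Set.Ioi (0:ℝ), Real.exp (-θ) * g (Real.exp (-θ)) := by
  rw [← exp_neg_image, integral_image_eq_integral_abs_deriv_smul measurableSet_Ioi
    exp_neg_deriv exp_neg_injOn g]
  refine setIntegral_congr_fun measurableSet_Ioi (fun θ _ => ?_)
  simp [abs_of_pos (Real.exp_pos (-θ)), smul_eq_mul]

private lemma subst_exp_neg_integrable (g : ℝ → ℝ) :
    IntegrableOn g (Set.Ioo (0:ℝ) 1) ↔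
      IntegrableOn (fun θ => Real.exp (-θ) * g (Real.exp (-θ))) (Set.Ioi (0:ℝ)) := by
  rw [← exp_neg_image, integrableOn_image_iff_integrableOn_abs_deriv_smul measurableSet_Ioi
    exp_neg_deriv exp_neg_injOn g]
  refine integrableOn_congr_fun (fun θ _ => ?_) measurableSet_Ioi
  simp [abs_of_pos (Real.exp_pos (-θ)), smul_eq_mul]

private lemma beta_cf_eq {b c : ℝ} : ∀ x ∈ Set.uIcc (0:ℝ) 1,
    ((x:ℂ) ^ ((b:ℂ)-1) * (1-(x:ℂ)) ^ ((c:ℂ)-1)) = (((x ^ (b-1) * (1-x) ^ (c-1) : ℝ)):ℂ) := by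
  intro x hx
  rw [Set.uIcc_of_le (by norm_num : (0:ℝ) ≤ 1)] at hx
  have hx0 : (0:ℝ) ≤ x := hx.1
  have hx1 : (0:ℝ) ≤ 1 - x := by linarith [hx.2]
  rw [show ((b:ℂ)-1) = ((b-1 : ℝ):ℂ) by push_cast; ring,
    show ((c:ℂ)-1) = ((c-1 : ℝ):ℂ) by push_cast; ring,
    show (1-(x:ℂ)) = ((1-x : ℝ):ℂ) by push_cast; ring,
    ← Complex.ofReal_cpow hx0, ← Complex.ofReal_cpow hx1, ← Complex.ofReal_mul]

private lemma betaReal {b c : ℝ} (hb : 0 < b) (hc : 0 < c) :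
    ∫ t in Set.Ioo (0:ℝ) 1, t ^ (b-1) * (1-t) ^ (c-1)
      = Real.Gamma b * Real.Gamma c / Real.Gamma (b+c) := by
  have h1 : Complex.Gamma b * Complex.Gamma c
      = Complex.Gamma (b+c) * Complex.betaIntegral b c := by
    have := Complex.Gamma_mul_Gamma_eq_betaIntegral
      (s := (b:ℂ)) (t := (c:ℂ)) (by simpa using hb) (by simpa using hc)
    simpa using this
  have h2 : Complex.betaIntegral b c
      = ((∫ t in (0:ℝ)..1, t ^ (b-1) * (1-t) ^ (c-1) : ℝ) : ℂ) := by
    rw [Complex.betaIntegral, ← intervalIntegral.integral_ofReal]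
    exact intervalIntegral.integral_congr beta_cf_eq
  rw [h2, Complex.Gamma_ofReal, Complex.Gamma_ofReal, ← Complex.ofReal_add,
    Complex.Gamma_ofReal, ← Complex.ofReal_mul, ← Complex.ofReal_mul] at h1
  have h3 := Complex.ofReal_injective h1
  have h4 : Real.Gamma (b+c) ≠ 0 := (Real.Gamma_pos_of_pos (by linarith)).ne'
  rw [intervalIntegral.integral_of_le (by norm_num : (0:ℝ) ≤ 1),
    MeasureTheory.integral_Ioc_eq_integral_Ioo] at h3
  rw [h3, mul_comm, mul_div_assoc, div_self h4, mul_one]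

private lemma betaIntegrable {b c : ℝ} (hb : 0 < b) (hc : 0 < c) :
    IntegrableOn (fun t : ℝ => t ^ (b-1) * (1-t) ^ (c-1)) (Set.Ioo (0:ℝ) 1) := by
  have h := (Complex.betaIntegral_convergent (u := (b:ℂ)) (v := (c:ℂ))
    (by simpa using hb) (by simpa using hc)).1
  have h2 : IntegrableOn (fun x : ℝ => ((x ^ (b-1) * (1-x) ^ (c-1) : ℝ) : ℂ))
      (Set.Ioc (0:ℝ) 1) := by
    refine h.congr_fun (fun x hx => ?_) measurableSet_Ioc
    refine beta_cf_eq x ?_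
    rw [Set.uIcc_of_le (by norm_num : (0:ℝ) ≤ 1)]
    exact ⟨hx.1.le, hx.2⟩
  have h3 : IntegrableOn (fun x : ℝ => RCLike.re ((x ^ (b-1) * (1-x) ^ (c-1) : ℝ):ℂ))
      (Set.Ioc (0:ℝ) 1) := h2.re
  simpa using h3.mono_set Set.Ioo_subset_Ioc_self

private lemma key_fun (b a θ : ℝ) :
    Real.exp (-θ) * (Real.exp (-θ) ^ (b-1) * (1 - Real.exp (-θ)) ^ ((1-a)-1))
      = Real.exp (-(b*θ)) * (1 - Real.exp (-θ)) ^ (-a) := by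
  rw [← Real.exp_mul, ← mul_assoc, ← Real.exp_add, show (1-a)-1 = -a by ring,
    show -θ + -θ*(b-1) = -(b*θ) by ring]


private noncomputable def poch (a : ℝ) (n : ℕ) : ℝ :=
  (∏ k ∈ Finset.range n, (a + k)) / n.factorial

private lemma poch_zero (a : ℝ) : poch a 0 = 1 := by simp [poch]

private lemma poch_succ (a : ℝ) (n : ℕ) :
    poch a (n+1) = poch a n * ((a + n) / (n+1)) := by
  rw [poch, poch, Finset.prod_range_succ, Nat.factorial_succ]
  push_cast
  rw [div_mul_div_comm, mul_comm ((n:ℝ)+1)]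

private lemma poch_nonneg {a : ℝ} (ha : 0 ≤ a) (n : ℕ) : 0 ≤ poch a n := by
  induction n with
  | zero => simp [poch_zero]
  | succ n ih =>
    rw [poch_succ]
    have : (0:ℝ) ≤ (a + n) / (n+1) := by positivity
    exact mul_nonneg ih this

private lemma poch_le_one {a : ℝ} (ha : 0 ≤ a) (ha1 : a ≤ 1) (n : ℕ) : poch a n ≤ 1 := by
  induction n with
  | zero => simp [poch_zero]
  | succ n ih =>
    rw [poch_succ]
    have h1 : (a + n) / (n+1) ≤ 1 := by
      rw [div_le_one (by positivity)]
      linarith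
    calc poch a n * ((a + n) / (n+1)) ≤ 1 * 1 :=
          mul_le_mul ih h1 (by positivity) zero_le_one
      _ = 1 := by ring

private lemma poch_abs_le {a : ℝ} (ha : 0 ≤ a) (ha1 : a ≤ 1) (n : ℕ) : |poch a n| ≤ 1 := by
  rw [abs_of_nonneg (poch_nonneg ha n)]; exact poch_le_one ha ha1 n

private lemma binom_summable {a y : ℝ} (ha : 0 ≤ a) (ha1 : a ≤ 1) (hy : |y| < 1) :
    Summable (fun n => poch a n * y ^ n) := by
  refine Summable.of_norm_bounded (summable_geometric_of_lt_one (abs_nonneg y) hy) (fun n => ?_)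
  rw [norm_mul, norm_pow]
  calc ‖poch a n‖ * ‖y‖ ^ n ≤ 1 * ‖y‖ ^ n := by
        apply mul_le_mul_of_nonneg_right _ (by positivity)
        simpa [Real.norm_eq_abs] using poch_abs_le ha ha1 n
    _ = |y| ^ n := by rw [one_mul]; norm_num

private lemma binom_Dsummable {r : ℝ} (hr0 : 0 ≤ r) (hr1 : r < 1) :
    Summable (fun n : ℕ => (n : ℝ) * r ^ (n-1)) := by
  rw [← summable_nat_add_iff 1]
  have h1 : Summable (fun n : ℕ => (n:ℝ)^1 * r^n) :=
    summable_pow_mul_geometric_of_norm_lt_one 1 (by rwa [Real.norm_eq_abs, abs_of_nonneg hr0])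
  have h2 : Summable (fun n : ℕ => r^n) := summable_geometric_of_lt_one hr0 hr1
  refine (h1.add h2).congr (fun n => ?_)
  simp [pow_one]
  ring

private noncomputable def binomS (a y : ℝ) : ℝ := ∑' n, poch a n * y ^ n
private noncomputable def binomD (a y : ℝ) : ℝ := ∑' n, poch a n * ((n:ℝ) * y ^ (n-1))

private lemma binom_bound {a : ℝ} (ha : 0 ≤ a) (ha1 : a ≤ 1) {r : ℝ} (n : ℕ) {y : ℝ}
    (hy : |y| ≤ r) : ‖poch a n * ((n:ℝ) * y ^ (n-1))‖ ≤ (n:ℝ) * r ^ (n-1) := by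
  have hr0 : 0 ≤ r := le_trans (abs_nonneg y) hy
  rw [norm_mul, norm_mul, norm_pow, Real.norm_natCast, Real.norm_eq_abs, Real.norm_eq_abs]
  calc |poch a n| * ((n:ℝ) * |y| ^ (n-1)) ≤ 1 * ((n:ℝ) * r ^ (n-1)) := by
        apply mul_le_mul (poch_abs_le ha ha1 n) _ (by positivity) zero_le_one
        exact mul_le_mul_of_nonneg_left (pow_le_pow_left₀ (abs_nonneg y) hy _) (by positivity)
    _ = (n:ℝ) * r ^ (n-1) := one_mul _

private lemma binomD_summable {a : ℝ} (ha : 0 ≤ a) (ha1 : a ≤ 1) {y : ℝ} (hy : |y| < 1) :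
    Summable (fun n : ℕ => poch a n * ((n:ℝ) * y ^ (n-1))) :=
  Summable.of_norm_bounded (binom_Dsummable (abs_nonneg y) hy)
    (fun n => binom_bound ha ha1 n le_rfl)

private lemma binomS_hasDerivAt {a : ℝ} (ha : 0 ≤ a) (ha1 : a ≤ 1) {r : ℝ} (hr0 : 0 < r)
    (hr1 : r < 1) {y : ℝ} (hy : y ∈ Set.Ioo (-r) r) :
    HasDerivAt (binomS a) (binomD a y) y := by
  refine hasDerivAt_tsum_of_isPreconnected (binom_Dsummable hr0.le hr1) isOpen_Ioo
    (convex_Ioo _ _).isPreconnected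
    (fun n z hz => (hasDerivAt_pow n z).const_mul (poch a n))
    (fun n z hz => binom_bound ha ha1 n (abs_le.mpr ⟨hz.1.le, hz.2.le⟩)) (y₀ := 0)
    (by constructor <;> simpa using hr0) ?_ hy
  exact binom_summable ha ha1 (by norm_num)

private lemma binom_ODE {a : ℝ} (ha : 0 ≤ a) (ha1 : a ≤ 1) {y : ℝ} (hy : |y| < 1) :
    (1-y) * binomD a y = a * binomS a y := by
  have hSs : HasSum (fun n => poch a n * y ^ n) (binomS a y) :=
    (binom_summable ha ha1 hy).hasSum
  have hDs : HasSum (fun n : ℕ => poch a n * ((n:ℝ) * y ^ (n-1))) (binomD a y) :=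
    (binomD_summable ha ha1 hy).hasSum
  have hD' : HasSum (fun n : ℕ => poch a (n+1) * (((n:ℝ)+1) * y ^ n)) (binomD a y) := by
    have h2 := (hasSum_nat_add_iff' (f := fun n : ℕ => poch a n * ((n:ℝ) * y ^ (n-1))) 1).mpr hDs
    simp only [Finset.range_one, Finset.sum_singleton, Nat.cast_zero, zero_mul, mul_zero,
      sub_zero] at h2
    refine h2.congr_fun (fun n => ?_)
    push_cast
    simp
  have hyD : HasSum (fun n : ℕ => poch a n * (n:ℝ) * y ^ n) (binomD a y * y) := by
    refine (hDs.mul_right y).congr_fun (fun n => ?_)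
    cases n with
    | zero => simp
    | succ m => simp only [Nat.add_sub_cancel, pow_succ]; ring
  have hsub := hD'.sub hyD
  have heq : ∀ n : ℕ, poch a (n+1) * (((n:ℝ)+1) * y ^ n) - poch a n * (n:ℝ) * y ^ n
      = a * (poch a n * y ^ n) := by
    intro n
    rw [poch_succ]
    have hn : ((n:ℝ)+1) ≠ 0 := by positivity
    field_simp
    ring
  rw [show (fun n : ℕ => poch a (n+1) * (((n:ℝ)+1) * y ^ n) - poch a n * (n:ℝ) * y ^ n)
      = (fun n : ℕ => a * (poch a n * y ^ n)) from funext heq] at hsub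
  have := hsub.unique (hSs.mul_left a)
  nlinarith [this]

private lemma binom_hasSum {a x : ℝ} (ha : 0 ≤ a) (ha1 : a ≤ 1) (hx0 : 0 ≤ x) (hx1 : x < 1) :
    HasSum (fun n => poch a n * x ^ n) ((1-x) ^ (-a)) := by
  set r := (1+x)/2 with hr
  have hr0 : 0 < r := by rw [hr]; linarith
  have hr1 : r < 1 := by rw [hr]; linarith
  have hxr : x < r := by rw [hr]; linarith
  have hders : ∀ y ∈ Set.Icc 0 x, HasDerivAt (fun y => binomS a y * (1-y) ^ a) 0 y := by
    intro y hy
    have hyt : y ∈ Set.Ioo (-r) r := ⟨by linarith [hy.1], by linarith [hy.2]⟩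
    have h1y : 0 < 1 - y := by linarith [hy.2]
    have habs : |y| < 1 := abs_lt.mpr ⟨by linarith [hy.1], by linarith [hy.2]⟩
    have hd1 := binomS_hasDerivAt ha ha1 hr0 hr1 hyt
    have hd2 : HasDerivAt (fun y : ℝ => (1-y) ^ a) (a * (1-y) ^ (a-1) * (-1)) y := by
      have hinner : HasDerivAt (fun y : ℝ => 1 - y) (-1) y := (hasDerivAt_id y).const_sub 1
      exact (Real.hasDerivAt_rpow_const (Or.inl h1y.ne')).comp y hinner
    have hd := hd1.mul hd2
    have hzero : binomD a y * (1-y) ^ a + binomS a y * (a * (1-y) ^ (a-1) * (-1)) = 0 := by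
      have e1 : (1-y) ^ a = (1-y) ^ (a-1) * (1-y) := by
        rw [← Real.rpow_add_one h1y.ne' (a-1)]; ring_nf
      rw [e1]
      linear_combination (1-y) ^ (a-1) * binom_ODE ha ha1 habs
    rw [hzero] at hd
    exact hd
  have hcont : ContinuousOn (fun y => binomS a y * (1-y) ^ a) (Set.Icc 0 x) :=
    fun y hy => ((hders y hy).continuousAt).continuousWithinAt
  have hconst := constant_of_has_deriv_right_zero hcont
    (fun y hy => ((hders y (Set.Ico_subset_Icc_self hy)).hasDerivWithinAt))
  have hxx := hconst x (Set.right_mem_Icc.mpr hx0)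
  have hS0 : binomS a 0 = 1 := by
    rw [binomS, tsum_eq_single 0 (fun n hn => by simp [zero_pow hn])]
    simp [poch_zero]
  rw [hS0] at hxx
  simp only [sub_zero, Real.one_rpow, mul_one] at hxx
  have h1x : 0 < 1 - x := by linarith
  have hSx : binomS a x = (1-x) ^ (-a) := by
    rw [Real.rpow_neg h1x.le]
    field_simp
    linarith [hxx]
  have := (binom_summable ha ha1 (abs_lt.mpr ⟨by linarith, hx1⟩)).hasSum
  rwa [show (∑' n, poch a n * x ^ n) = binomS a x from rfl, hSx] at this

private lemma theta_beta {a b : ℝ} (ha0 : 0 < a) (ha1 : a < 1) (hb : 0 < b) :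
    (∫ θ in Set.Ioi (0:ℝ), Real.exp (-(b*θ)) * (1 - Real.exp (-θ)) ^ (-a))
      = Real.Gamma b * Real.Gamma (1-a) / Real.Gamma (b+(1-a)) := by
  have h := subst_exp_neg (fun t => t ^ (b-1) * (1-t) ^ ((1-a)-1))
  simp only [key_fun b a] at h
  rw [← h, betaReal hb (by linarith)]

private lemma theta_integrable {a b : ℝ} (ha0 : 0 < a) (ha1 : a < 1) (hb : 0 < b) :
    IntegrableOn (fun θ => Real.exp (-(b*θ)) * (1 - Real.exp (-θ)) ^ (-a))
      (Set.Ioi (0:ℝ)) := by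
  have h := (subst_exp_neg_integrable (fun t => t ^ (b-1) * (1-t) ^ ((1-a)-1))).mp
    (betaIntegrable hb (by linarith))
  simpa only [key_fun b a] using h

private lemma Gamma_prod {a : ℝ} (ha : 0 < a) (n : ℕ) :
    Real.Gamma (a + 1 + n) = Real.Gamma a * ∏ k ∈ Finset.range (n+1), (a + k) := by
  induction n with
  | zero => simp [Real.Gamma_add_one ha.ne']; ring
  | succ n ih =>
    have h : a + 1 + ((n:ℕ)+1:ℕ) = (a + 1 + n) + 1 := by push_cast; ring
    rw [h, Real.Gamma_add_one (by positivity : (0:ℝ) < a+1+n).ne', ih,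
      Finset.prod_range_succ (fun k : ℕ => (a + (k:ℝ))) (n+1)]
    push_cast
    ring

private lemma g_integral {a : ℝ} (ha0 : 0 < a) (ha1 : a < 1) (n : ℕ) :
    ∫ θ in Set.Ioi (0:ℝ), Real.exp (-((a+1+n)*θ)) * (1 - Real.exp (-θ)) ^ (-a)
      = π / Real.sin (π*a) * poch a (n+1) := by
  rw [theta_beta ha0 ha1 (by positivity : (0:ℝ) < a+1+n)]
  rw [show a+1+(n:ℝ)+(1-a) = ((n+1:ℕ):ℝ)+1 by push_cast; ring, Real.Gamma_nat_eq_factorial,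
    Gamma_prod ha0 n, poch, ← Real.Gamma_mul_Gamma_one_sub a]
  field_simp

private lemma exp_helper {p q s t u B : ℝ} (h : p + q + s = t + u) :
    Real.exp p * (Real.exp q * B) * Real.exp s = Real.exp t * (Real.exp u * B) := by
  have h2 : Real.exp p * Real.exp q * Real.exp s = Real.exp t * Real.exp u := by
    rw [← Real.exp_add, ← Real.exp_add, ← Real.exp_add, h]
  calc Real.exp p * (Real.exp q * B) * Real.exp s
      = Real.exp p * Real.exp q * Real.exp s * B := by ring
    _ = Real.exp t * Real.exp u * B := by rw [h2]
    _ = Real.exp t * (Real.exp u * B) := by ring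

theorem stmt_0 (a z : ℝ) (ha0 : 0 < a) (ha1 : a < 1) (hz : 0 < z) :
    ∫ θ in Set.Ioi (0:ℝ),
      Real.exp (-(a+1)*θ) * (1 - Real.exp (-θ)) ^ (-a) * (Real.exp z - Real.exp (-θ))⁻¹
    = ((1 - Real.exp (-z)) ^ (-a) - 1) * π / Real.sin (π * a) := by
  set x := Real.exp (-z) with hxdef
  have hx0 : 0 < x := Real.exp_pos _
  have hx1 : x < 1 := by rw [hxdef, Real.exp_lt_one_iff]; linarith
  set f : ℕ → ℝ → ℝ := fun n θ =>
    Real.exp (-((n+1)*z)) * (Real.exp (-((a+1+n)*θ)) * (1 - Real.exp (-θ)) ^ (-a)) with hfdef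
  -- pointwise series expansion
  have hpt : ∀ θ ∈ Set.Ioi (0:ℝ), HasSum (fun n => f n θ)
      (Real.exp (-(a+1)*θ) * (1 - Real.exp (-θ)) ^ (-a) * (Real.exp z - Real.exp (-θ))⁻¹) := by
    intro θ hθ
    have hθ0 : 0 < θ := hθ
    have hr1 : Real.exp (-(z+θ)) < 1 := by rw [Real.exp_lt_one_iff]; linarith
    have hgeo := hasSum_geometric_of_lt_one (Real.exp_pos (-(z+θ))).le hr1
    set B : ℝ := (1 - Real.exp (-θ)) ^ (-a) with hB
    have hmul := hgeo.mul_left (Real.exp (-z) * (Real.exp (-(a+1)*θ) * B))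
    have hfun : ∀ n : ℕ, Real.exp (-z) * (Real.exp (-(a+1)*θ) * B) * Real.exp (-(z+θ)) ^ n
        = f n θ := by
      intro n
      rw [← Real.exp_nat_mul]
      exact exp_helper (by push_cast; ring)
    have hval : Real.exp (-z) * (Real.exp (-(a+1)*θ) * B) * (1 - Real.exp (-(z+θ)))⁻¹
        = Real.exp (-(a+1)*θ) * B * (Real.exp z - Real.exp (-θ))⁻¹ := by
      have he : Real.exp z - Real.exp (-θ) = Real.exp z * (1 - Real.exp (-(z+θ))) := by
        rw [mul_sub, mul_one, ← Real.exp_add]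
        ring_nf
      rw [he, mul_inv, ← Real.exp_neg]
      ring
    rw [← hval]
    exact hmul.congr_fun (fun n => (hfun n).symm)
  -- rewrite integrand as a tsum
  rw [setIntegral_congr_fun measurableSet_Ioi
    (fun θ hθ => ((hpt θ hθ).tsum_eq).symm : Set.EqOn _ _ (Set.Ioi (0:ℝ)))]
  -- swap integral and sum
  have hmeas : ∀ n : ℕ, AEStronglyMeasurable (f n) (volume.restrict (Set.Ioi (0:ℝ))) := by
    intro n
    apply Measurable.aestronglyMeasurable
    fun_prop
  set g : ℝ → ℝ := fun θ => Real.exp (-((a+1)*θ)) * (1 - Real.exp (-θ)) ^ (-a) with hgdef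
  have hg : IntegrableOn g (Set.Ioi (0:ℝ)) := theta_integrable ha0 ha1 (by linarith)
  have hgm : Measurable g := by fun_prop
  have hC : (∫⁻ θ in Set.Ioi (0:ℝ), ‖g θ‖₊) < ⊤ := hg.2
  have hbound : ∀ n : ℕ, (∫⁻ θ in Set.Ioi (0:ℝ), ‖f n θ‖₊)
      ≤ ENNReal.ofReal (Real.exp (-((n+1)*z))) * ∫⁻ θ in Set.Ioi (0:ℝ), ‖g θ‖₊ := by
    intro n
    rw [← lintegral_const_mul' _ _ ENNReal.ofReal_ne_top]
    refine setLIntegral_mono (by fun_prop) (fun θ hθ => ?_)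
    have hθ0 : (0:ℝ) < θ := hθ
    simp only [← enorm_eq_nnnorm, ← ofReal_norm]
    rw [← ENNReal.ofReal_mul (Real.exp_pos _).le]
    apply ENNReal.ofReal_le_ofReal
    rw [hfdef]
    simp only [norm_mul, Real.norm_eq_abs, abs_mul, abs_of_pos (Real.exp_pos _)]
    rw [hgdef]
    simp only [norm_mul, Real.norm_eq_abs, abs_mul, abs_of_pos (Real.exp_pos _)]
    have h1 : Real.exp (-((a+1+n)*θ)) ≤ Real.exp (-((a+1)*θ)) := by
      apply Real.exp_le_exp.mpr
      nlinarith [Nat.cast_nonneg (α := ℝ) n]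
    have h2 : (0:ℝ) ≤ |(1 - Real.exp (-θ)) ^ (-a)| := abs_nonneg _
    exact mul_le_mul_of_nonneg_left (mul_le_mul_of_nonneg_right h1 h2) (Real.exp_pos _).le
  have hfin : (∑' n : ℕ, ∫⁻ θ in Set.Ioi (0:ℝ), ‖f n θ‖₊) ≠ ⊤ := by
    have hsum : Summable (fun n : ℕ => Real.exp (-((n+1)*z))) := by
      refine ((summable_geometric_of_lt_one hx0.le hx1).mul_left x).congr (fun n => ?_)
      rw [hxdef, ← Real.exp_nat_mul, ← Real.exp_add]
      congr 1
      push_cast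
      ring
    refine ne_top_of_le_ne_top ?_ (ENNReal.tsum_le_tsum hbound)
    rw [ENNReal.tsum_mul_right, ← ENNReal.ofReal_tsum_of_nonneg
      (fun n => (Real.exp_pos _).le) hsum]
    exact ENNReal.mul_ne_top ENNReal.ofReal_ne_top hC.ne
  rw [integral_tsum hmeas hfin]
  -- evaluate each integral
  have hterm : ∀ n : ℕ, (∫ θ in Set.Ioi (0:ℝ), f n θ)
      = π / Real.sin (π*a) * (poch a (n+1) * x ^ (n+1)) := by
    intro n
    rw [hfdef]
    simp only []
    rw [MeasureTheory.integral_const_mul, g_integral ha0 ha1 n]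
    rw [show Real.exp (-((n+1)*z)) = x ^ (n+1) by
      rw [hxdef, ← Real.exp_nat_mul]; congr 1; push_cast; ring]
    ring
  simp_rw [hterm]
  -- sum the series
  have hbin := binom_hasSum ha0.le ha1.le hx0.le hx1
  have hs1 := (hasSum_nat_add_iff' (f := fun n => poch a n * x ^ n) 1).mpr hbin
  simp only [Finset.range_one, Finset.sum_singleton, poch_zero, pow_zero, mul_one] at hs1
  have hs2 := hs1.mul_left (π / Real.sin (π*a))
  rw [hs2.tsum_eq]
  rw [show π * a = a * π from mul_comm π a] at *
  rw [show Real.sin (a * π) = Real.sin (π * a) from by rw [mul_comm]]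
  ring
end

section
/- Let ψ^↑(θ) = m · Γ(θ+α)/(Γ(θ)Γ(α)) for θ ≥ 0, where m > 0 and 1 < α < 2. Then ψ^↑ vanishes at θ = 0, is strictly positive for θ > 0, and the function W(x) = (1/m)(1 - e^{-x})^{α-1} satisfies ψ^↑(θ) ∫₀^∞ e^{-θx} W(x) dx = 1 for all θ > 0. -/
open Real MeasureTheory

lemma real_beta (u v : ℝ) (hu : 0 < u) (hv : 0 < v) :
    ∫ x in Set.Ioo (0:ℝ) 1, x ^ (u - 1) * (1 - x) ^ (v - 1) =
      Real.Gamma u * Real.Gamma v / Real.Gamma (u + v) := by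
  have hC := Complex.Gamma_mul_Gamma_eq_betaIntegral (s := (u:ℂ)) (t := (v:ℂ))
    (by simpa using hu) (by simpa using hv)
  have hβ : Complex.betaIntegral u v =
      ((∫ x in Set.Ioo (0:ℝ) 1, x ^ (u - 1) * (1 - x) ^ (v - 1) : ℝ) : ℂ) := by
    rw [Complex.betaIntegral, intervalIntegral.integral_of_le zero_le_one,
      MeasureTheory.integral_Ioc_eq_integral_Ioo]
    refine Eq.trans ?_ integral_ofReal
    refine setIntegral_congr_fun measurableSet_Ioo fun x hx => ?_
    rw [show ((u:ℂ) - 1) = ((u - 1 : ℝ):ℂ) by push_cast; ring,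
      show ((v:ℂ) - 1) = ((v - 1 : ℝ):ℂ) by push_cast; ring,
      show (1 - (x:ℂ)) = ((1 - x : ℝ):ℂ) by push_cast; ring,
      ← Complex.ofReal_cpow hx.1.le, ← Complex.ofReal_cpow (by linarith [hx.2] : (0:ℝ) ≤ 1 - x),
      ← Complex.ofReal_mul]
    norm_cast
  rw [hβ, ← Complex.ofReal_add, Complex.Gamma_ofReal, Complex.Gamma_ofReal,
    Complex.Gamma_ofReal, ← Complex.ofReal_mul, ← Complex.ofReal_mul] at hC
  have h := Complex.ofReal_injective hC
  have hne : Real.Gamma (u + v) ≠ 0 := (Real.Gamma_pos_of_pos (by linarith)).ne'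
  field_simp
  linarith [h]

theorem stmt_5 (α m : ℝ) (hα1 : 1 < α) (hα2 : α < 2) (hm : 0 < m)
    (ψ : ℝ → ℝ) (hψ : ∀ θ ≥ 0, ψ θ = m * Real.Gamma (θ + α) / (Real.Gamma θ * Real.Gamma α))
    (W : ℝ → ℝ) (hW : ∀ x, W x = (1/m) * (1 - Real.exp (-x)) ^ (α - 1)) :
    ψ 0 = 0 ∧ (∀ θ > 0, 0 < ψ θ) ∧
    ∀ θ > 0, ψ θ * ∫ x in Set.Ioi (0:ℝ), Real.exp (-θ*x) * W x = 1 := by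
  have hαpos : (0:ℝ) < α := by linarith
  refine ⟨?_, ?_, ?_⟩
  · rw [hψ 0 le_rfl, Real.Gamma_zero]
    simp
  · intro θ hθ
    rw [hψ θ hθ.le]
    have := Real.Gamma_pos_of_pos hθ
    have := Real.Gamma_pos_of_pos hαpos
    have := Real.Gamma_pos_of_pos (by linarith : 0 < θ + α)
    positivity
  · intro θ hθ
    -- substitution x = -log t
    have himg : (fun t : ℝ => -Real.log t) '' Set.Ioo 0 1 = Set.Ioi (0:ℝ) := by
      ext y
      constructor
      · rintro ⟨t, ⟨ht0, ht1⟩, rfl⟩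
        simpa using Real.log_neg ht0 ht1
      · intro hy
        refine ⟨Real.exp (-y), ⟨Real.exp_pos _, ?_⟩, by simp⟩
        rw [Real.exp_lt_one_iff]
        simpa using (Set.mem_Ioi.mp hy)
    have hderiv : ∀ t ∈ Set.Ioo (0:ℝ) 1,
        HasDerivWithinAt (fun t : ℝ => -Real.log t) (-(t⁻¹)) (Set.Ioo 0 1) t := by
      intro t ht
      exact ((Real.hasDerivAt_log ht.1.ne').hasDerivWithinAt).neg
    have hinj : Set.InjOn (fun t : ℝ => -Real.log t) (Set.Ioo 0 1) := by
      intro a ha b hb hab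
      have : Real.log a = Real.log b := by linarith [neg_injective hab]
      exact Real.log_injOn_pos (Set.mem_Ioi.mpr ha.1) (Set.mem_Ioi.mpr hb.1) this
    have hsub := MeasureTheory.integral_image_eq_integral_abs_deriv_smul
      measurableSet_Ioo hderiv hinj (fun x => Real.exp (-θ*x) * W x)
    rw [himg] at hsub
    have hint : ∫ x in Set.Ioi (0:ℝ), Real.exp (-θ*x) * W x =
        (1/m) * ∫ t in Set.Ioo (0:ℝ) 1, t ^ (θ - 1) * (1 - t) ^ (α - 1) := by
      rw [hsub, ← MeasureTheory.integral_const_mul]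
      refine setIntegral_congr_fun measurableSet_Ioo fun t ht => ?_
      have ht0 := ht.1
      have hexp : Real.exp (-(-Real.log t)) = t := by
        rw [neg_neg, Real.exp_log ht0]
      rw [smul_eq_mul, hW, hexp, abs_neg, abs_inv, abs_of_pos ht0]
      have hpow : Real.exp (-θ * -Real.log t) = t ^ θ := by
        rw [Real.rpow_def_of_pos ht0]
        ring_nf
      rw [hpow, Real.rpow_sub ht0, Real.rpow_one]
      rw [div_eq_mul_inv]
      ring
    rw [hint, real_beta θ α hθ hαpos, hψ θ hθ.le]
    have h1 := Real.Gamma_pos_of_pos hθ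
    have h2 := Real.Gamma_pos_of_pos hαpos
    have h3 := Real.Gamma_pos_of_pos (by linarith : 0 < θ + α)
    field_simp
end

section
/- For 0 < β < 1 (two-sided jumps, β = α(1-ρ)) and z > 0, ∫₀^∞ (sin(πβ)/π) (e^z - 1)^β (e^{z+θ} - e^z)^{-β} (e^{z+θ} - 1)^{-1} dθ = 1 - (1 - e^{-z})^{β}. -/
open Real MeasureTheory

section Aux
open Set

lemma aux_beta (a b : ℝ) (ha : 0 < a) (hb : 0 < b) :
    IntegrableOn (fun t : ℝ => t ^ (a-1) * (1-t) ^ (b-1)) (Ioo (0:ℝ) 1) ∧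
    ∫ t in Ioo (0:ℝ) 1, t ^ (a-1) * (1-t) ^ (b-1)
      = Real.Gamma a * Real.Gamma b / Real.Gamma (a+b) := by
  have hc : IntervalIntegrable
      (fun x : ℝ => (x:ℂ) ^ ((a:ℂ)-1) * (1 - (x:ℂ)) ^ ((b:ℂ)-1)) volume 0 1 :=
    Complex.betaIntegral_convergent (by simpa using ha) (by simpa using hb)
  have heq : ∀ x ∈ Ioo (0:ℝ) 1,
      (x:ℂ) ^ ((a:ℂ)-1) * (1 - (x:ℂ)) ^ ((b:ℂ)-1)
        = ((x ^ (a-1) * (1-x) ^ (b-1) : ℝ) : ℂ) := by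
    intro x hx
    rw [Complex.ofReal_mul, Complex.ofReal_cpow hx.1.le,
      Complex.ofReal_cpow (by linarith [hx.2] : (0:ℝ) ≤ 1 - x)]
    push_cast
    ring
  have hIoo : IntegrableOn
      (fun x : ℝ => ((x ^ (a-1) * (1-x) ^ (b-1) : ℝ) : ℂ)) (Ioo (0:ℝ) 1) := by
    refine (hc.1.mono_set Ioo_subset_Ioc_self).congr_fun ?_ measurableSet_Ioo
    exact heq
  have hint : IntegrableOn (fun t : ℝ => t ^ (a-1) * (1-t) ^ (b-1)) (Ioo (0:ℝ) 1) := by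
    have := hIoo.re
    simpa [IntegrableOn] using this
  refine ⟨hint, ?_⟩
  -- value
  have h1 : Complex.betaIntegral a b
      = ∫ t in Ioo (0:ℝ) 1, ((t ^ (a-1) * (1-t) ^ (b-1) : ℝ) : ℂ) := by
    rw [Complex.betaIntegral, intervalIntegral.integral_of_le zero_le_one,
      integral_Ioc_eq_integral_Ioo]
    exact setIntegral_congr_fun measurableSet_Ioo heq
  have h2 : Complex.betaIntegral a b
      = ((Real.Gamma a * Real.Gamma b / Real.Gamma (a+b) : ℝ) : ℂ) := by
    have hg := Complex.Gamma_mul_Gamma_eq_betaIntegral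
      (s := (a:ℂ)) (t := (b:ℂ)) (by simpa using ha) (by simpa using hb)
    have hne : Complex.Gamma ((a:ℂ) + b) ≠ 0 := by
      rw [← Complex.ofReal_add, Complex.Gamma_ofReal]
      exact_mod_cast (Real.Gamma_pos_of_pos (by linarith)).ne'
    have h3 : Complex.Gamma ((a:ℂ)+b) * Complex.betaIntegral a b / Complex.Gamma ((a:ℂ)+b)
        = Complex.betaIntegral a b := mul_div_cancel_left₀ _ hne
    rw [← h3, ← hg]
    push_cast [← Complex.Gamma_ofReal]
    rfl
  rw [h1] at h2
  have h4 := congrArg Complex.re h2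
  simp only [← RCLike.re_to_complex] at h4
  rw [← integral_re hIoo] at h4
  simpa using h4

lemma aux_K (β c : ℝ) (hβ0 : 0 < β) (hβ1 : β < 1) (hc : 0 < c) :
    IntegrableOn (fun x : ℝ => x ^ (-β) * (x + c)⁻¹) (Ioi (0:ℝ)) ∧
    ∫ x in Ioi (0:ℝ), x ^ (-β) * (x + c)⁻¹ = c ^ (-β) * (π / Real.sin (π * β)) := by
  set f : ℝ → ℝ := fun t => c * t / (1 - t) with hf
  have hderiv : ∀ t ∈ Ioo (0:ℝ) 1,
      HasDerivWithinAt f (c / (1-t)^2) (Ioo (0:ℝ) 1) t := by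
    intro t ht
    have h1 : (1:ℝ) - t ≠ 0 := by have := ht.2; intro h; linarith [sub_eq_zero.mp h]
    have hd := (((hasDerivAt_id t).const_mul c).div ((hasDerivAt_id t).const_sub 1) h1)
    have hd2 : HasDerivWithinAt f ((c * 1 * (1 - id t) - c * id t * -1) / (1 - id t) ^ 2)
        (Ioo (0:ℝ) 1) t := hd.hasDerivWithinAt
    convert hd2 using 1
    simp only [id]
    ring
  have hinj : InjOn f (Ioo (0:ℝ) 1) := by
    intro t ht u hu h
    have h1 : (1:ℝ) - t ≠ 0 := by have := ht.2; intro hh; linarith [sub_eq_zero.mp hh]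
    have h2 : (1:ℝ) - u ≠ 0 := by have := hu.2; intro hh; linarith [sub_eq_zero.mp hh]
    rw [hf] at h
    field_simp at h
    nlinarith [h, hc]
  have himg : f '' Ioo (0:ℝ) 1 = Ioi (0:ℝ) := by
    ext x
    constructor
    · rintro ⟨t, ht, rfl⟩
      exact div_pos (mul_pos hc ht.1) (by linarith [ht.2])
    · intro hx
      have hx0 : (0:ℝ) < x := hx
      refine ⟨x / (x + c), ⟨by positivity, ?_⟩, ?_⟩
      · rw [div_lt_one (by positivity)]; linarith
      · rw [hf]
        have hxc : x + c ≠ 0 := by positivity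
        field_simp
        rw [add_sub_cancel_left, div_self hc.ne']
  have key := integral_image_eq_integral_abs_deriv_smul measurableSet_Ioo hderiv hinj
    (fun x => x ^ (-β) * (x + c)⁻¹)
  have keyI := integrableOn_image_iff_integrableOn_abs_deriv_smul measurableSet_Ioo hderiv hinj
    (fun x => x ^ (-β) * (x + c)⁻¹)
  rw [himg] at key keyI
  have hptw : ∀ t ∈ Ioo (0:ℝ) 1,
      |c / (1-t)^2| • ((f t) ^ (-β) * (f t + c)⁻¹)
        = c ^ (-β) * (t ^ ((1-β)-1) * (1-t) ^ (β-1)) := by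
    intro t ht
    have ht0 : (0:ℝ) < t := ht.1
    have h1t : (0:ℝ) < 1 - t := by linarith [ht.2]
    have habs : |c / (1-t)^2| = c / (1-t)^2 := abs_of_pos (by positivity)
    have hA : f t + c = c / (1-t) := by rw [hf]; field_simp; ring
    have hB : (f t) ^ (-β) = c ^ (-β) * t ^ (-β) * (1-t) ^ β := by
      rw [hf]
      simp only
      rw [Real.div_rpow (by positivity) h1t.le, Real.mul_rpow hc.le ht0.le,
        Real.rpow_neg h1t.le, div_inv_eq_mul]
    have hC : t ^ ((1-β)-1) = t ^ (-β) := by norm_num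
    have hD : (1-t) ^ (β-1) = (1-t) ^ β / (1-t) := by
      rw [Real.rpow_sub h1t, Real.rpow_one]
    rw [habs, hA, hB, hC, hD]
    have h1t' : (1-t) ≠ 0 := h1t.ne'
    have hc' : c ≠ 0 := hc.ne'
    field_simp
    rw [smul_eq_mul]; field_simp
  have hbeta := aux_beta (1-β) β (by linarith) hβ0
  constructor
  · rw [keyI]
    apply (IntegrableOn.congr_fun _ (fun t ht => (hptw t ht).symm) measurableSet_Ioo)
    exact (hbeta.1.const_mul _)
  · rw [key, setIntegral_congr_fun measurableSet_Ioo hptw, MeasureTheory.integral_const_mul, hbeta.2]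
    have : Real.Gamma (1-β+β) = 1 := by norm_num [Real.Gamma_one]
    rw [this, div_one, mul_comm (Real.Gamma (1-β)), Real.Gamma_mul_Gamma_one_sub β]

end Aux

open Set in
theorem stmt_8 (β z : ℝ) (hβ0 : 0 < β) (hβ1 : β < 1) (hz : 0 < z) :
    ∫ θ in Set.Ioi (0:ℝ),
      (Real.sin (π * β) / π) * (Real.exp z - 1) ^ β *
        (Real.exp (z + θ) - Real.exp z) ^ (-β) * (Real.exp (z + θ) - 1)⁻¹
    = 1 - (1 - Real.exp (-z)) ^ β := by
  set a : ℝ := Real.exp z with ha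
  have ha1 : 1 < a := by rw [ha]; exact Real.one_lt_exp_iff.mpr hz
  have hb0 : 0 < a - 1 := by linarith
  set D : ℝ := Real.sin (π * β) / π * (a - 1) ^ β with hD
  set G : ℝ → ℝ := fun x => D * (x ^ (-β) * (x + (a-1))⁻¹ * (x + a)⁻¹) with hG
  -- substitution f θ = exp (z+θ) - exp z
  set f : ℝ → ℝ := fun θ => Real.exp (z + θ) - a with hf
  have hderiv : ∀ θ ∈ Ioi (0:ℝ),
      HasDerivWithinAt f (Real.exp (z + θ)) (Ioi (0:ℝ)) θ := by
    intro θ _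
    have h1 : HasDerivAt (fun θ : ℝ => Real.exp (z + θ)) (Real.exp (z + θ)) θ := by
      have := (Real.hasDerivAt_exp (z + θ)).comp θ ((hasDerivAt_id θ).const_add z)
      simpa [Function.comp_def] using this
    exact (h1.sub_const a).hasDerivWithinAt
  have hinj : InjOn f (Ioi (0:ℝ)) := by
    intro t _ u _ h
    have h' : Real.exp (z + t) = Real.exp (z + u) := by
      simp only [hf] at h; linarith
    have := Real.exp_injective h'
    linarith
  have himg : f '' Ioi (0:ℝ) = Ioi (0:ℝ) := by
    ext x
    constructor
    · rintro ⟨θ, hθ, rfl⟩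
      have : a < Real.exp (z + θ) := by
        rw [ha]; exact Real.exp_lt_exp.mpr (by linarith [mem_Ioi.mp hθ])
      simp [hf]; linarith
    · intro hx
      have hx0 : (0:ℝ) < x := hx
      have hxa : a < x + a := by linarith
      have hxa0 : (0:ℝ) < x + a := by linarith
      refine ⟨Real.log (x + a) - z, ?_, ?_⟩
      · have : z < Real.log (x + a) := (Real.lt_log_iff_exp_lt hxa0).mpr (by rw [← ha]; linarith)
        simpa using this
      · simp only [hf]
        rw [show z + (Real.log (x + a) - z) = Real.log (x + a) by ring, Real.exp_log hxa0]
        ring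
  have key := integral_image_eq_integral_abs_deriv_smul measurableSet_Ioi hderiv hinj G
  rw [himg] at key
  have hptw : ∀ θ ∈ Ioi (0:ℝ),
      |Real.exp (z + θ)| • G (f θ)
      = (Real.sin (π * β) / π) * (Real.exp z - 1) ^ β *
        (Real.exp (z + θ) - Real.exp z) ^ (-β) * (Real.exp (z + θ) - 1)⁻¹ := by
    intro θ hθ
    have hθ0 : (0:ℝ) < θ := hθ
    have he : 0 < Real.exp (z + θ) := Real.exp_pos _
    have hea : a < Real.exp (z + θ) := by
      rw [ha]; exact Real.exp_lt_exp.mpr (by linarith)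
    have h1 : f θ + (a - 1) = Real.exp (z + θ) - 1 := by simp only [hf]; ring
    have h2 : f θ + a = Real.exp (z + θ) := by simp only [hf]; ring
    rw [abs_of_pos he, smul_eq_mul, hG]
    simp only
    rw [h1, h2, hD, ← ha]
    have hne1 : Real.exp (z + θ) - 1 ≠ 0 := by intro hh; nlinarith
    field_simp
    ring
  rw [← setIntegral_congr_fun measurableSet_Ioi hptw, ← key]
  -- partial fractions
  have hKb := aux_K β (a-1) hβ0 hβ1 hb0
  have hKa := aux_K β a hβ0 hβ1 (by linarith)
  have hsplit : ∀ x ∈ Ioi (0:ℝ),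
      G x = D * (x ^ (-β) * (x + (a-1))⁻¹) - D * (x ^ (-β) * (x + a)⁻¹) := by
    intro x hx
    have hx0 : (0:ℝ) < x := hx
    have h1 : x + (a-1) ≠ 0 := by positivity
    have h2 : x + a ≠ 0 := by positivity
    rw [hG]
    simp only
    field_simp
    ring
  rw [setIntegral_congr_fun measurableSet_Ioi hsplit,
    integral_sub (hKb.1.const_mul D) (hKa.1.const_mul D),
    MeasureTheory.integral_const_mul, MeasureTheory.integral_const_mul, hKb.2, hKa.2]
  -- final algebra
  have hπ : (0:ℝ) < π := Real.pi_pos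
  have hsin : 0 < Real.sin (π * β) := Real.sin_pos_of_pos_of_lt_pi (by positivity)
    (by nlinarith)
  have h1 : Real.sin (π * β) / π * (π / Real.sin (π * β)) = 1 := by field_simp
  have hb : (a-1) ^ β * (a-1) ^ (-β) = 1 := by
    rw [← Real.rpow_add hb0]; simp
  have hba : (a-1) ^ β * a ^ (-β) = (1 - Real.exp (-z)) ^ β := by
    have haz : (a - 1) / a = 1 - Real.exp (-z) := by
      rw [Real.exp_neg, ← ha]; field_simp
    rw [← haz, Real.div_rpow hb0.le (by linarith), Real.rpow_neg (by linarith : (0:ℝ) ≤ a)]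
    ring
  have e2 : D * ((a-1) ^ (-β) * (π / Real.sin (π * β))) = 1 := by
    calc D * ((a-1) ^ (-β) * (π / Real.sin (π * β)))
        = ((a-1) ^ β * (a-1) ^ (-β)) * (Real.sin (π * β) / π * (π / Real.sin (π * β))) := by
          rw [hD]; ring
      _ = 1 := by rw [hb, h1, mul_one]
  have e3 : D * (a ^ (-β) * (π / Real.sin (π * β))) = (1 - Real.exp (-z)) ^ β := by
    calc D * (a ^ (-β) * (π / Real.sin (π * β)))
        = ((a-1) ^ β * a ^ (-β)) * (Real.sin (π * β) / π * (π / Real.sin (π * β))) := by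
          rw [hD]; ring
      _ = (1 - Real.exp (-z)) ^ β := by rw [hba, h1, mul_one]
  rw [e2, e3]
end
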